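/- For every purely imaginary quaternion t ∈ Im ℍ there exists a piecewise-C¹ horizontal curve γ : [0,1] → ℍ × Im ℍ with γ(0) = (0, 0) and γ(1) = (0, t). -/

import Mathlib

open Quaternion Set

/-- The horizontality condition at a point of differentiability:
`β′(l) = −2 Im(α′(l) · conj(α(l)))`. -/
def HorizontalAt (α β : ℝ → ℍ[ℝ]) (l : ℝ) : Prop :=
  ∃ a' b' : ℍ[ℝ], HasDerivAt α a' l ∧ HasDerivAt β b' l ∧
    b' = (-2 : ℝ) • Quaternion.im (a' * star (α l))

/-- A piecewise-C¹ horizontal curve `(α, β) : [a, b] → ℍ × Im ℍ`: it is continuous,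
takes vertical values in the imaginary quaternions, and away from a finite set of
points it is differentiable with continuous derivative and satisfies the
horizontality condition. -/
def IsPiecewiseHorizontal (α β : ℝ → ℍ[ℝ]) (a b : ℝ) : Prop :=
  ContinuousOn (fun l => (α l, β l)) (Icc a b) ∧
  (∀ l ∈ Icc a b, (β l).re = 0) ∧
  ∃ F : Finset ℝ,
    (∀ l ∈ Icc a b, l ∉ F → HorizontalAt α β l) ∧
    ContinuousOn (fun l => deriv α l) (Icc a b \ F)

open Real in
set_option maxHeartbeats 1000000 in
/-- The key algebraic identity for horizontality of the circle curve. -/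
private lemma horiz_key (t : ℍ[ℝ]) (ht : t.re = 0) (S C : ℝ) (h : S^2 + C^2 = 1) :
    (1 - C) • t = (-2 : ℝ) • Quaternion.im
      ((((-(S * (2*π))) : ℝ) • (1:ℍ[ℝ]) + (C * (2*π)) • ((-(4*π)⁻¹) • t)) *
       star (((C - 1 : ℝ)) • (1:ℍ[ℝ]) + S • ((-(4*π)⁻¹) • t))) := by
  have hπ := Real.pi_ne_zero
  ext <;>
    simp [Quaternion.re_mul, Quaternion.imI_mul, Quaternion.imJ_mul, Quaternion.imK_mul, ht] <;>
    field_simp <;> ring_nf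
  · linear_combination (t.imI  * π * -16) * h
  · linear_combination (t.imJ  * π * -16) * h
  · linear_combination (t.imK  * π * -16) * h

open Real in
set_option maxHeartbeats 1000000 in
/-- For every purely imaginary quaternion `t` there is a piecewise-C¹ horizontal
curve `γ : [0,1] → ℍ × Im ℍ` with `γ(0) = (0, 0)` and `γ(1) = (0, t)`. -/
theorem exists_horizontal_curve_to_vertical_point (t : ℍ[ℝ]) (ht : t.re = 0) :
    ∃ α β : ℝ → ℍ[ℝ], IsPiecewiseHorizontal α β 0 1 ∧
      α 0 = 0 ∧ β 0 = 0 ∧ α 1 = 0 ∧ β 1 = t := by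
  have hπ := Real.pi_ne_zero
  set u : ℍ[ℝ] := (-(4*π)⁻¹) • t with hu
  set α : ℝ → ℍ[ℝ] := fun l => (Real.cos (2*π*l) - 1) • (1:ℍ[ℝ]) + Real.sin (2*π*l) • u with hα
  set β : ℝ → ℍ[ℝ] := fun l => (l - Real.sin (2*π*l)/(2*π)) • t with hβ
  have hcos : ∀ l : ℝ, HasDerivAt (fun l => Real.cos (2*π*l)) (-Real.sin (2*π*l) * (2*π)) l := by
    intro l
    have := (Real.hasDerivAt_cos (2*π*l)).comp l ((hasDerivAt_id l).const_mul (2*π))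
    simpa [Function.comp_def, mul_comm] using this
  have hsin : ∀ l : ℝ, HasDerivAt (fun l => Real.sin (2*π*l)) (Real.cos (2*π*l) * (2*π)) l := by
    intro l
    have := (Real.hasDerivAt_sin (2*π*l)).comp l ((hasDerivAt_id l).const_mul (2*π))
    simpa [Function.comp_def, mul_comm] using this
  have hdα : ∀ l : ℝ, HasDerivAt α
      ((-(Real.sin (2*π*l) * (2*π))) • (1:ℍ[ℝ]) + (Real.cos (2*π*l) * (2*π)) • u) l := by
    intro l
    have h1 := (((hcos l).sub_const 1).smul_const (1:ℍ[ℝ])).add ((hsin l).smul_const u)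
    exact h1.congr_deriv (by rw [neg_mul])
  have hdβ : ∀ l : ℝ, HasDerivAt β ((1 - Real.cos (2*π*l)) • t) l := by
    intro l
    have h1 := (((hasDerivAt_id l).sub ((hsin l).div_const (2*π))).smul_const t)
    exact h1.congr_deriv (by rw [mul_div_cancel_right₀ _ (by positivity)])
  refine ⟨α, β, ⟨?_, ?_, ∅, ?_, ?_⟩, ?_, ?_, ?_, ?_⟩
  · apply Continuous.continuousOn
    fun_prop
  · intro l _
    simp [hβ, hu, ht]
  · intro l _ _
    exact ⟨_, _, hdα l, hdβ l,
      horiz_key t ht (Real.sin (2*π*l)) (Real.cos (2*π*l)) (Real.sin_sq_add_cos_sq _)⟩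
  · apply Continuous.continuousOn
    have : (fun l => deriv α l) = fun l =>
        ((-(Real.sin (2*π*l) * (2*π))) • (1:ℍ[ℝ]) + (Real.cos (2*π*l) * (2*π)) • u) := by
      funext l; exact (hdα l).deriv
    rw [this]
    fun_prop
  · simp [hα]
  · simp [hβ]
  · simp [hα]
  · simp [hβ, hπ]
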